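/- Let p and p̃ be probability density functions of univariate real random variables, let Q_K be the probability mass function of the rank statistic A_K, and define d_K(p, p̃) = (1/(K+1)) · Σ_{n=0}^{K} |1/(K+1) − Q_K(n)|. If ‖p − p̃‖_{L¹(ℝ)} ≤ ε, then d_K(p, p̃) ≤ ε; that is, d_K is continuous with respect to the L¹(ℝ) norm. -/

import Mathlib

open MeasureTheory

/-- The pmf of the rank statistic `A_K`:
`Q_K(n) = ∫ C(K,n) F̃(y)^n (1 - F̃(y))^{K-n} p(y) dy`, where `F̃` is the cdf of `p̃`. -/
noncomputable def rankPMF (p Ftilde : ℝ → ℝ) (K n : ℕ) : ℝ :=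
  ∫ y, (K.choose n : ℝ) * Ftilde y ^ n * (1 - Ftilde y) ^ (K - n) * p y

/-- The ISL discrepancy `d_K(p, p̃) = (1/(K+1)) Σ_{n=0}^K |1/(K+1) - Q_K(n)|`. -/
noncomputable def dISL (p Ftilde : ℝ → ℝ) (K : ℕ) : ℝ :=
  (1 / (K + 1 : ℝ)) *
    ∑ n ∈ Finset.range (K + 1), |1 / (K + 1 : ℝ) - rankPMF p Ftilde K n|

section Aux

open Set Filter Topology intervalIntegral
open scoped NNReal ENNReal


lemma beta_nat (m : ℕ) : ∀ n : ℕ, ∫ x in (0:ℝ)..1, x ^ n * (1 - x) ^ m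
    = (n.factorial * m.factorial : ℝ) / ((n + m + 1).factorial) := by
  induction m with
  | zero =>
    intro n
    simp only [pow_zero, mul_one, integral_pow, one_pow, Nat.factorial_zero, Nat.cast_one,
      Nat.add_zero]
    rw [Nat.factorial_succ]
    push_cast
    rw [zero_pow (by omega)]
    field_simp
    norm_num
  | succ m ih =>
    intro n
    have hu : ∀ x ∈ uIcc (0:ℝ) 1, HasDerivAt (fun x : ℝ => (1-x)^(m+1))
        (-(((m:ℝ)+1) * (1-x)^m)) x := by
      intro x _
      have h1 : HasDerivAt (fun x : ℝ => 1 - x) (-1) x := (hasDerivAt_id x).const_sub 1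
      have h2 := h1.pow (m+1)
      refine h2.congr_deriv ?_
      push_cast
      simp
    have hv : ∀ x ∈ uIcc (0:ℝ) 1, HasDerivAt (fun x : ℝ => x^(n+1)/((n:ℝ)+1)) (x^n) x := by
      intro x _
      have h1 : HasDerivAt (fun x : ℝ => x^(n+1)) (((n:ℝ)+1) * x^n) x := by
        simpa using hasDerivAt_pow (n+1) x
      have h2 := h1.div_const ((n:ℝ)+1)
      have hn : ((n:ℝ)+1) ≠ 0 := by positivity
      refine h2.congr_deriv ?_
      field_simp
    have key := integral_mul_deriv_eq_deriv_mul hu hv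
      (by apply Continuous.intervalIntegrable; continuity)
      (by apply Continuous.intervalIntegrable; continuity)
    have h1 : ∫ x in (0:ℝ)..1, x ^ n * (1-x)^(m+1)
        = ∫ x in (0:ℝ)..1, (1-x)^(m+1) * x ^ n :=
      integral_congr fun x _ => mul_comm _ _
    have h2 : ∫ x in (0:ℝ)..1, -(((m:ℝ)+1) * (1-x)^m) * (x^(n+1)/((n:ℝ)+1))
        = (-(((m:ℝ)+1)/((n:ℝ)+1))) * ∫ x in (0:ℝ)..1, x^(n+1) * (1-x)^m := by
      rw [← intervalIntegral.integral_const_mul]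
      apply integral_congr
      intro x _
      have hn : ((n:ℝ)+1) ≠ 0 := by positivity
      field_simp
    rw [h1, key, h2, ih (n+1)]
    have e1 : n + 1 + m + 1 = n + (m+1) + 1 := by omega
    rw [e1]
    have hfne : ((n + (m+1) + 1).factorial : ℝ) ≠ 0 := by positivity
    rw [Nat.factorial_succ (m), Nat.factorial_succ n]
    push_cast
    have hn : ((n:ℝ)+1) ≠ 0 := by positivity
    rw [sub_self, zero_pow (by omega)]
    field_simp
    ring



lemma integral_comp_cdf (pt F : ℝ → ℝ) (hnn : ∀ x, 0 ≤ pt x) (hint : Integrable pt)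
    (hone : ∫ x, pt x = 1) (hF : ∀ y, F y = ∫ x in Iic y, pt x)
    (g : ℝ → ℝ) (hg : Continuous g) :
    ∫ y, g (F y) * pt y = ∫ u in Ioc (0:ℝ) 1, g u := by
  -- basic properties of F
  have hmono : Monotone F := by
    intro a b hab
    rw [hF, hF]
    exact setIntegral_mono_set hint.integrableOn (ae_restrict_of_ae (ae_of_all _ hnn))
      ((Iic_subset_Iic.mpr hab).eventuallyLE)
  have hF0 : ∀ y, 0 ≤ F y := fun y => by
    rw [hF]; exact setIntegral_nonneg measurableSet_Iic fun x _ => hnn x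
  have hF1 : ∀ y, F y ≤ 1 := fun y => by
    rw [hF, ← hone]; exact setIntegral_le_integral hint (ae_of_all _ hnn)
  have hFeq : F = fun y => F 0 + ∫ x in (0:ℝ)..y, pt x := by
    funext y
    rw [hF y, hF 0, ← intervalIntegral.integral_Iic_sub_Iic hint.integrableOn hint.integrableOn]
    ring
  have hcont : Continuous F := by
    rw [hFeq]
    exact continuous_const.add
      (intervalIntegral.continuous_primitive (fun a b => hint.intervalIntegrable) 0)
  have htop : Tendsto F atTop (𝓝 1) := by
    have hcov : AECover (volume : Measure ℝ) atTop (fun y : ℝ => Iic y) :=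
      MeasureTheory.aecover_Iic tendsto_id
    have h := hcov.integral_tendsto_of_countably_generated hint
    rw [hone] at h
    exact h.congr fun y => (hF y).symm
  have hbot : Tendsto F atBot (𝓝 0) := by
    have hcov : AECover (volume : Measure ℝ) atBot (fun y : ℝ => Ioi y) :=
      MeasureTheory.aecover_Ioi tendsto_id
    have h := hcov.integral_tendsto_of_countably_generated hint
    rw [hone] at h
    have h2 : Tendsto (fun y : ℝ => 1 - ∫ x in Ioi y, pt x) atBot (𝓝 (1 - 1)) :=
      tendsto_const_nhds.sub h
    rw [sub_self] at h2
    refine h2.congr fun y => ?_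
    have hsplit := intervalIntegral.integral_Iic_add_Ioi (b := y) hint.integrableOn
      hint.integrableOn
    rw [hone] at hsplit
    rw [hF]
    linarith
  -- withDensity measure
  set μ : Measure ℝ := volume.withDensity (fun x => ENNReal.ofReal (pt x)) with hμdef
  have hμIic : ∀ y, μ (Iic y) = ENNReal.ofReal (F y) := by
    intro y
    rw [hμdef, withDensity_apply _ measurableSet_Iic,
      ← ofReal_integral_eq_lintegral_ofReal hint.integrableOn
        (ae_restrict_of_ae (ae_of_all _ hnn)), hF]
  have hμuniv : μ univ = 1 := by
    rw [hμdef, withDensity_apply _ MeasurableSet.univ, setLIntegral_univ,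
      ← ofReal_integral_eq_lintegral_ofReal hint (ae_of_all _ hnn), hone, ENNReal.ofReal_one]
  have : IsProbabilityMeasure μ := ⟨hμuniv⟩
  have hFmeas : Measurable F := hcont.measurable
  set ν : Measure ℝ := μ.map F with hνdef
  have : IsProbabilityMeasure ν := Measure.isProbabilityMeasure_map hFmeas.aemeasurable
  have hν : ν = volume.restrict (Ioc (0:ℝ) 1) := by
    refine MeasureTheory.Measure.ext_of_Iic ν _ (fun t => ?_)
    rw [hνdef, Measure.map_apply hFmeas measurableSet_Iic,
      Measure.restrict_apply measurableSet_Iic]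
    rcases lt_or_ge t 0 with ht | ht
    · have h1 : F ⁻¹' Iic t = ∅ := by
        ext y; simp only [mem_preimage, mem_Iic, mem_empty_iff_false, iff_false, not_le]
        exact lt_of_lt_of_le ht (hF0 y)
      have h2 : Iic t ∩ Ioc (0:ℝ) 1 = ∅ := by
        ext x; simp only [mem_inter_iff, mem_Iic, mem_Ioc, mem_empty_iff_false, iff_false]
        rintro ⟨hx1, hx2, -⟩; linarith
      rw [h1, h2]; simp
    rcases le_or_gt 1 t with ht1 | ht1
    · have h1 : F ⁻¹' Iic t = univ := eq_univ_of_forall fun y => (hF1 y).trans ht1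
      have h2 : Iic t ∩ Ioc (0:ℝ) 1 = Ioc 0 1 := by
        apply inter_eq_self_of_subset_right
        intro x hx; exact le_trans hx.2 ht1
      rw [h1, h2, hμuniv, Real.volume_Ioc]
      norm_num
    · -- 0 ≤ t < 1
      have h2 : Iic t ∩ Ioc (0:ℝ) 1 = Ioc 0 t := by
        ext x
        simp only [mem_inter_iff, mem_Iic, mem_Ioc]
        constructor
        · rintro ⟨hx1, hx2, -⟩; exact ⟨hx2, hx1⟩
        · rintro ⟨hx1, hx2⟩; exact ⟨hx2, hx1, hx2.trans ht1.le⟩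
      rw [h2, Real.volume_Ioc, sub_zero]
      rcases eq_empty_or_nonempty (F ⁻¹' Iic t) with hS | hS
      · -- empty preimage forces t = 0 (as F → 0 at -∞ and t ≥ 0)
        have ht0 : t ≤ 0 := by
          by_contra h
          push_neg at h
          obtain ⟨y, hy⟩ := (hbot.eventually (eventually_lt_nhds h)).exists
          exact absurd (hy.le : F y ≤ t) (by
            intro hc
            have : y ∈ F ⁻¹' Iic t := hc
            rw [hS] at this
            exact this)
        have : t = 0 := le_antisymm ht0 ht
        rw [hS, this]
        simp
      · have hbdd : BddAbove (F ⁻¹' Iic t) := by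
          obtain ⟨z, hz⟩ := (htop.eventually (eventually_gt_nhds ht1)).exists
          refine ⟨z, fun y hy => ?_⟩
          by_contra h
          push_neg at h
          exact absurd (le_trans (hmono h.le) hy) (not_le.mpr hz)
        have hclosed : IsClosed (F ⁻¹' Iic t) := isClosed_Iic.preimage hcont
        set c := sSup (F ⁻¹' Iic t) with hc
        have hcmem : c ∈ F ⁻¹' Iic t := hclosed.csSup_mem hS hbdd
        have hSeq : F ⁻¹' Iic t = Iic c := by
          ext y
          constructor
          · exact fun hy => le_csSup hbdd hy
          · intro hy
            exact le_trans (hmono hy) hcmem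
        have hFc : F c = t := by
          refine le_antisymm hcmem ?_
          have hev : ∀ᶠ y in 𝓝[>] c, t ≤ F y := by
            filter_upwards [self_mem_nhdsWithin] with y hy
            by_contra h
            push_neg at h
            have : y ∈ F ⁻¹' Iic t := h.le
            rw [hSeq] at this
            exact absurd (show y ≤ c from this) (not_le.mpr hy)
          exact ge_of_tendsto (hcont.continuousAt.continuousWithinAt) hev
        rw [hSeq, hμIic, hFc]
  -- transfer integrals
  have hsmul : ∫ y, g (F y) ∂μ = ∫ y, g (F y) * pt y := by
    rw [hμdef]
    have hptm : AEMeasurable (fun x => Real.toNNReal (pt x)) (volume : Measure ℝ) :=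
      measurable_real_toNNReal.comp_aemeasurable hint.aemeasurable
    have heq : (fun x => ENNReal.ofReal (pt x))
        = fun x => ((Real.toNNReal (pt x) : ℝ≥0) : ℝ≥0∞) := rfl
    rw [heq, integral_withDensity_eq_integral_smul₀ hptm]
    refine integral_congr_ae (ae_of_all _ fun y => ?_)
    show (pt y).toNNReal • g (F y) = g (F y) * pt y
    rw [NNReal.smul_def, smul_eq_mul, Real.coe_toNNReal _ (hnn y), mul_comm]
  have hmap : ∫ y, g (F y) ∂μ = ∫ u, g u ∂ν := by
    rw [hνdef, integral_map hFmeas.aemeasurable hg.aestronglyMeasurable]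
  rw [← hsmul, hmap, hν]


/-- Bound on the Bernstein-type integrand. -/
lemma bernstein_term_mem_Icc (K n : ℕ) (hn : n ≤ K) {u : ℝ} (h0 : 0 ≤ u) (h1 : u ≤ 1) :
    (K.choose n : ℝ) * u ^ n * (1 - u) ^ (K - n) ∈ Icc (0:ℝ) 1 := by
  have h1u : 0 ≤ 1 - u := by linarith
  constructor
  · positivity
  · have hsum : (1:ℝ) = ∑ m ∈ Finset.range (K + 1), u ^ m * (1 - u) ^ (K - m) * K.choose m := by
      have := add_pow u (1 - u) K
      simp only [add_sub_cancel, one_pow] at this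
      exact this
    calc (K.choose n : ℝ) * u ^ n * (1 - u) ^ (K - n)
        = u ^ n * (1 - u) ^ (K - n) * K.choose n := by ring
      _ ≤ ∑ m ∈ Finset.range (K + 1), u ^ m * (1 - u) ^ (K - m) * K.choose m := by
          apply Finset.single_le_sum (f := fun m => u ^ m * (1 - u) ^ (K - m) * (K.choose m : ℝ))
          · intro m _; positivity
          · exact Finset.mem_range.mpr (Nat.lt_succ_of_le hn)
      _ = 1 := hsum.symm

/-- The rank pmf of `p̃` against its own cdf is uniform. -/
lemma rankPMF_self (pt F : ℝ → ℝ) (hnn : ∀ x, 0 ≤ pt x) (hint : Integrable pt)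
    (hone : ∫ x, pt x = 1) (hF : ∀ y, F y = ∫ x in Iic y, pt x)
    (K n : ℕ) (hn : n ≤ K) :
    rankPMF pt F K n = 1 / (K + 1 : ℝ) := by
  have hg : Continuous fun u : ℝ => (K.choose n : ℝ) * u ^ n * (1 - u) ^ (K - n) := by
    continuity
  have h := integral_comp_cdf pt F hnn hint hone hF _ hg
  have h2 : rankPMF pt F K n
      = ∫ u in Ioc (0:ℝ) 1, (K.choose n : ℝ) * u ^ n * (1 - u) ^ (K - n) := h
  have h3 : ∫ x in (0:ℝ)..1, (K.choose n : ℝ) * x ^ n * (1 - x) ^ (K - n)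
      = (K.choose n : ℝ) * ∫ x in (0:ℝ)..1, x ^ n * (1 - x) ^ (K - n) := by
    rw [← intervalIntegral.integral_const_mul]
    exact intervalIntegral.integral_congr fun x _ => by ring
  rw [h2, ← intervalIntegral.integral_of_le (zero_le_one), h3, beta_nat (K - n) n]
  have e1 : n + (K - n) + 1 = K + 1 := by omega
  rw [e1]
  have hch : (K.choose n : ℝ) * (n.factorial * (K - n).factorial) = K.factorial := by
    rw [← Nat.cast_mul, ← Nat.cast_mul, ← mul_assoc, Nat.choose_mul_factorial_mul_factorial hn]
  rw [Nat.factorial_succ K]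
  push_cast
  push_cast at hch
  have hKf : (K.factorial : ℝ) ≠ 0 := by positivity
  have hK1 : ((K:ℝ) + 1) ≠ 0 := by positivity
  field_simp
  nlinarith [hch]

end Aux

/-- **`d_K` is continuous w.r.t. the L¹ norm.** For probability densities `p, p̃` on
`ℝ` (with `F̃` the cdf of `p̃`), if `‖p - p̃‖_{L¹(ℝ)} ≤ ε` then `d_K(p, p̃) ≤ ε`. -/
theorem dISL_le_of_L1_close
    (p ptilde : ℝ → ℝ) (Ftilde : ℝ → ℝ) (ε : ℝ)
    (hp_nonneg : ∀ x, 0 ≤ p x) (hp_int : Integrable p)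
    (hp_one : ∫ x, p x = 1)
    (hpt_nonneg : ∀ x, 0 ≤ ptilde x) (hpt_int : Integrable ptilde)
    (hpt_one : ∫ x, ptilde x = 1)
    (hF : ∀ y, Ftilde y = ∫ x in Set.Iic y, ptilde x)
    (hL1 : (∫ x, |p x - ptilde x|) ≤ ε)
    (K : ℕ) :
    dISL p Ftilde K ≤ ε := by
  have hF0 : ∀ y, 0 ≤ Ftilde y := fun y => by
    rw [hF]; exact setIntegral_nonneg measurableSet_Iic fun x _ => hpt_nonneg x
  have hF1 : ∀ y, Ftilde y ≤ 1 := fun y => by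
    rw [hF, ← hpt_one]; exact setIntegral_le_integral hpt_int (Filter.Eventually.of_forall hpt_nonneg)
  have hFcont : Continuous Ftilde := by
    have hFeq : Ftilde = fun y => Ftilde 0 + ∫ x in (0:ℝ)..y, ptilde x := by
      funext y
      rw [hF y, hF 0,
        ← intervalIntegral.integral_Iic_sub_Iic hpt_int.integrableOn hpt_int.integrableOn]
      ring
    rw [hFeq]
    exact continuous_const.add
      (intervalIntegral.continuous_primitive (fun a b => hpt_int.intervalIntegrable) 0)
  -- per-term bound
  have key : ∀ n ∈ Finset.range (K + 1),
      |1 / (K + 1 : ℝ) - rankPMF p Ftilde K n| ≤ ∫ x, |p x - ptilde x| := by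
    intro n hn
    have hnK : n ≤ K := Nat.lt_succ_iff.mp (Finset.mem_range.mp hn)
    set g : ℝ → ℝ := fun u => (K.choose n : ℝ) * u ^ n * (1 - u) ^ (K - n) with hgdef
    have hgb : ∀ y, g (Ftilde y) ∈ Set.Icc (0:ℝ) 1 := fun y =>
      bernstein_term_mem_Icc K n hnK (hF0 y) (hF1 y)
    have hgmeas : AEStronglyMeasurable (fun y => g (Ftilde y)) (volume : Measure ℝ) := by
      have hgc : Continuous g := by
        rw [hgdef]; continuity
      exact (hgc.comp hFcont).aestronglyMeasurable
    have hgnorm : ∀ y, ‖g (Ftilde y)‖ ≤ 1 := fun y => by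
      rw [Real.norm_eq_abs, abs_le]
      exact ⟨by linarith [(hgb y).1], (hgb y).2⟩
    have hip : Integrable (fun y => g (Ftilde y) * p y) := hp_int.bdd_mul hgmeas (ae_of_all _ hgnorm)
    have hipt : Integrable (fun y => g (Ftilde y) * ptilde y) := hpt_int.bdd_mul hgmeas (ae_of_all _ hgnorm)
    have hrp : rankPMF p Ftilde K n = ∫ y, g (Ftilde y) * p y := rfl
    have hrpt : rankPMF ptilde Ftilde K n = ∫ y, g (Ftilde y) * ptilde y := rfl
    rw [← rankPMF_self ptilde Ftilde hpt_nonneg hpt_int hpt_one hF K n hnK, hrp, hrpt,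
      ← integral_sub hipt hip]
    have h1 : |∫ y, (g (Ftilde y) * ptilde y - g (Ftilde y) * p y)|
        ≤ ∫ y, |g (Ftilde y) * ptilde y - g (Ftilde y) * p y| := by
      rw [← Real.norm_eq_abs]
      exact (norm_integral_le_integral_norm _).trans (le_of_eq (by simp [Real.norm_eq_abs]))
    refine h1.trans (integral_mono (hipt.sub hip).abs ((hp_int.sub hpt_int).abs) fun y => ?_)
    have : g (Ftilde y) * ptilde y - g (Ftilde y) * p y = g (Ftilde y) * (ptilde y - p y) := by
      ring
    rw [this, abs_mul, abs_sub_comm (ptilde y) (p y)]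
    calc |g (Ftilde y)| * |p y - ptilde y| ≤ 1 * |p y - ptilde y| := by
          apply mul_le_mul_of_nonneg_right _ (abs_nonneg _)
          rw [abs_le]; exact ⟨by linarith [(hgb y).1], (hgb y).2⟩
      _ = |p y - ptilde y| := one_mul _
  -- sum up
  have hsum : ∑ n ∈ Finset.range (K + 1), |1 / (K + 1 : ℝ) - rankPMF p Ftilde K n|
      ≤ (K + 1 : ℝ) * ε := by
    calc ∑ n ∈ Finset.range (K + 1), |1 / (K + 1 : ℝ) - rankPMF p Ftilde K n|
        ≤ ∑ _n ∈ Finset.range (K + 1), ε :=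
          Finset.sum_le_sum fun n hn => (key n hn).trans hL1
      _ = (K + 1 : ℝ) * ε := by
          rw [Finset.sum_const, Finset.card_range, nsmul_eq_mul]
          push_cast
          ring
  rw [dISL]
  have hK1 : (0:ℝ) < K + 1 := by positivity
  calc (1 / (K + 1 : ℝ)) * ∑ n ∈ Finset.range (K + 1), |1 / (K + 1 : ℝ) - rankPMF p Ftilde K n|
      ≤ (1 / (K + 1 : ℝ)) * ((K + 1 : ℝ) * ε) := by
        apply mul_le_mul_of_nonneg_left hsum
        positivity
    _ = ε := by field_simp
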